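/- Let E_1,...,E_m, M_1,...,M_m, Z_1,...,Z_m be random variables with values in finite sets on a common probability space, and let ε ≥ 0. Write M^j = (M_1,...,M_j) and Z^j = (Z_1,...,Z_j). Assume: (i) for every j in {1,...,m}, I(E_j; (M_j, Z_j)) ≤ ε; and (ii) for every j in {2,...,m}, the chaining Markov condition I((M^{j−1}, Z^{j−1}); (M_j, E_j, Z_j) | E_{j−1}) = 0 holds. Then for every j in {1,...,m}, I(E_j; (M^j, Z^j)) ≤ j·ε. -/

import Mathlib

open Finset

/-- Probability that the random variable `X` takes the value `a`, under the
probability mass function `p` on the finite sample space `Ω`. -/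
noncomputable def probOf {Ω α : Type*} [Fintype Ω] [Fintype α] [DecidableEq α]
    (p : Ω → ℝ) (X : Ω → α) (a : α) : ℝ :=
  ∑ ω, if X ω = a then p ω else 0

/-- Shannon entropy (base 2) of the random variable `X`. -/
noncomputable def entropy {Ω α : Type*} [Fintype Ω] [Fintype α] [DecidableEq α]
    (p : Ω → ℝ) (X : Ω → α) : ℝ :=
  -∑ a, probOf p X a * Real.logb 2 (probOf p X a)

/-- Conditional entropy `H(X|Y)` (base 2). -/
noncomputable def condEntropy {Ω α β : Type*} [Fintype Ω] [Fintype α] [Fintype β]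
    [DecidableEq α] [DecidableEq β] (p : Ω → ℝ) (X : Ω → α) (Y : Ω → β) : ℝ :=
  entropy p (fun ω => (X ω, Y ω)) - entropy p Y

/-- Mutual information `I(X;Y)` (base 2). -/
noncomputable def mutualInfo {Ω α β : Type*} [Fintype Ω] [Fintype α] [Fintype β]
    [DecidableEq α] [DecidableEq β] (p : Ω → ℝ) (X : Ω → α) (Y : Ω → β) : ℝ :=
  entropy p X + entropy p Y - entropy p (fun ω => (X ω, Y ω))

/-- Conditional mutual information `I(X;Y|Z)` (base 2). -/
noncomputable def condMutualInfo {Ω α β γ : Type*} [Fintype Ω] [Fintype α] [Fintype β]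
    [Fintype γ] [DecidableEq α] [DecidableEq β] [DecidableEq γ]
    (p : Ω → ℝ) (X : Ω → α) (Y : Ω → β) (Z : Ω → γ) : ℝ :=
  entropy p (fun ω => (X ω, Z ω)) + entropy p (fun ω => (Y ω, Z ω))
    - entropy p (fun ω => (X ω, Y ω, Z ω)) - entropy p Z

/-- conditional pmf given `Z = z` -/
noncomputable def condp {Ω γ : Type*} [Fintype Ω] [Fintype γ] [DecidableEq γ]
    (p : Ω → ℝ) (Z : Ω → γ) (z : γ) : Ω → ℝ :=
  fun ω => if Z ω = z then p ω / probOf p Z z else 0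

section Helpers
variable {Ω α β γ δ : Type*} [Fintype Ω] [Fintype α] [Fintype β] [Fintype γ] [Fintype δ]
  [DecidableEq α] [DecidableEq β] [DecidableEq γ] [DecidableEq δ]
lemma probOf_nonneg (p : Ω → ℝ) (hp : ∀ ω, 0 ≤ p ω) (X : Ω → α) (a : α) :
    0 ≤ probOf p X a := by
  apply Finset.sum_nonneg
  intro ω _
  split_ifs <;> simp [hp ω]

lemma sum_probOf (p : Ω → ℝ) (X : Ω → α) : ∑ a, probOf p X a = ∑ ω, p ω := by
  unfold probOf
  rw [Finset.sum_comm]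
  apply Finset.sum_congr rfl
  intro ω _
  simp

lemma probOf_fst (p : Ω → ℝ) (X : Ω → α) (Y : Ω → β) (x : α) :
    probOf p X x = ∑ y, probOf p (fun ω => (X ω, Y ω)) (x, y) := by
  unfold probOf
  rw [Finset.sum_comm]
  apply Finset.sum_congr rfl
  intro ω _
  simp [Prod.ext_iff, ite_and]

lemma probOf_snd (p : Ω → ℝ) (X : Ω → α) (Y : Ω → β) (y : β) :
    probOf p Y y = ∑ x, probOf p (fun ω => (X ω, Y ω)) (x, y) := by
  unfold probOf
  rw [Finset.sum_comm]
  apply Finset.sum_congr rfl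
  intro ω _
  by_cases h : Y ω = y <;> simp [Prod.ext_iff, ite_and, h]

lemma entropy_comp (p : Ω → ℝ) (X : Ω → α) (f : α → β) (hf : Function.Injective f) :
    entropy p (fun ω => f (X ω)) = entropy p X := by
  unfold entropy
  congr 1
  rw [← Finset.sum_subset (Finset.subset_univ ((Finset.univ : Finset α).image f))]
  · rw [Finset.sum_image (fun a _ a' _ h => hf h)]
    apply Finset.sum_congr rfl
    intro a _
    have : probOf p (fun ω => f (X ω)) (f a) = probOf p X a := by
      unfold probOf
      apply Finset.sum_congr rfl
      intro ω _
      simp [hf.eq_iff]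
    rw [this]
  · intro b _ hb
    have : probOf p (fun ω => f (X ω)) b = 0 := by
      unfold probOf
      apply Finset.sum_eq_zero
      intro ω _
      have : f (X ω) ≠ b := fun h => hb (Finset.mem_image.mpr ⟨X ω, Finset.mem_univ _, h⟩)
      simp [this]
    simp [this]

lemma mutualInfo_comp (p : Ω → ℝ) (X : Ω → α) (Y : Ω → β) (f : β → γ)
    (hf : Function.Injective f) :
    mutualInfo p X (fun ω => f (Y ω)) = mutualInfo p X Y := by
  unfold mutualInfo
  rw [entropy_comp p Y f hf,
    show (fun ω => (X ω, f (Y ω))) = (fun ω => (Prod.map id f) (X ω, Y ω)) from rfl,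
    entropy_comp p (fun ω => (X ω, Y ω)) (Prod.map id f)
      (Function.Injective.prodMap Function.injective_id hf)]

lemma entropy_swap (p : Ω → ℝ) (X : Ω → α) (Y : Ω → β) :
    entropy p (fun ω => (Y ω, X ω)) = entropy p (fun ω => (X ω, Y ω)) := by
  rw [show (fun ω => (Y ω, X ω)) = (fun ω => Prod.swap (X ω, Y ω)) from rfl,
    entropy_comp p (fun ω => (X ω, Y ω)) Prod.swap Prod.swap_injective]

lemma mutualInfo_comm (p : Ω → ℝ) (X : Ω → α) (Y : Ω → β) :
    mutualInfo p X Y = mutualInfo p Y X := by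
  unfold mutualInfo
  rw [entropy_swap]
  ring

lemma mutualInfo_chain (p : Ω → ℝ) (X : Ω → α) (Y : Ω → β) (Z : Ω → γ) :
    mutualInfo p X (fun ω => (Y ω, Z ω)) = mutualInfo p X Z + condMutualInfo p X Y Z := by
  unfold mutualInfo condMutualInfo
  ring

lemma gibbs {ι : Type*} [Fintype ι] (q r : ι → ℝ) (hq : ∀ i, 0 ≤ q i) (hq1 : ∑ i, q i = 1)
    (hr : ∀ i, 0 ≤ r i) (hr1 : ∑ i, r i ≤ 1) (hsupp : ∀ i, 0 < q i → 0 < r i) :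
    ∑ i, q i * Real.logb 2 (r i) ≤ ∑ i, q i * Real.logb 2 (q i) := by
  have hlog2 : (0:ℝ) < Real.log 2 := Real.log_pos one_lt_two
  have key : ∀ i, q i * Real.logb 2 (r i) - q i * Real.logb 2 (q i)
      ≤ (r i - q i) / Real.log 2 := by
    intro i
    rcases eq_or_lt_of_le (hq i) with h | h
    · rw [← h]
      simpa using div_nonneg (hr i) hlog2.le
    · have hri := hsupp i h
      have hd : Real.logb 2 (r i) - Real.logb 2 (q i)
          = Real.log (r i / q i) / Real.log 2 := by
        rw [Real.logb, Real.logb, div_sub_div_same,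
          ← Real.log_div (ne_of_gt hri) (ne_of_gt h)]
      calc q i * Real.logb 2 (r i) - q i * Real.logb 2 (q i)
          = q i * (Real.log (r i / q i) / Real.log 2) := by rw [← mul_sub, hd]
        _ ≤ q i * ((r i / q i - 1) / Real.log 2) := by
            have hlog := Real.log_le_sub_one_of_pos (show 0 < r i / q i by positivity)
            gcongr
        _ = (r i - q i) / Real.log 2 := by field_simp
  have hsum := Finset.sum_le_sum (s := (Finset.univ : Finset ι)) (fun i _ => key i)
  rw [Finset.sum_sub_distrib] at hsum
  have : ∑ i, (r i - q i) / Real.log 2 = (∑ i, r i - 1) / Real.log 2 := by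
    rw [← Finset.sum_div, Finset.sum_sub_distrib, hq1]
  rw [this] at hsum
  have : (∑ i, r i - 1) / Real.log 2 ≤ 0 := by
    apply div_nonpos_of_nonpos_of_nonneg _ hlog2.le
    linarith
  linarith

lemma mutualInfo_nonneg (p : Ω → ℝ) (hp : ∀ ω, 0 ≤ p ω) (hp1 : ∑ ω, p ω = 1)
    (X : Ω → α) (Y : Ω → β) : 0 ≤ mutualInfo p X Y := by
  set q : α × β → ℝ := probOf p (fun ω => (X ω, Y ω)) with hqdef
  have hq0 : ∀ ab, 0 ≤ q ab := fun ab => probOf_nonneg p hp _ ab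
  have hq1 : ∑ ab, q ab = 1 := by rw [hqdef, sum_probOf, hp1]
  have hX : ∀ x, probOf p X x = ∑ y, q (x, y) := fun x => probOf_fst p X Y x
  have hY : ∀ y, probOf p Y y = ∑ x, q (x, y) := fun y => probOf_snd p X Y y
  have hXnn : ∀ x, 0 ≤ probOf p X x := fun x => probOf_nonneg p hp X x
  have hYnn : ∀ y, 0 ≤ probOf p Y y := fun y => probOf_nonneg p hp Y y
  -- support condition
  have hsX : ∀ x y, 0 < q (x, y) → 0 < probOf p X x := by
    intro x y h
    have hle : q (x, y) ≤ probOf p X x := by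
      rw [hX x]
      exact Finset.single_le_sum (f := fun y => q (x, y)) (fun y _ => hq0 _)
        (Finset.mem_univ y)
    linarith
  have hsY : ∀ x y, 0 < q (x, y) → 0 < probOf p Y y := by
    intro x y h
    have hle : q (x, y) ≤ probOf p Y y := by
      rw [hY y]
      exact Finset.single_le_sum (f := fun x => q (x, y)) (fun x _ => hq0 _)
        (Finset.mem_univ x)
    linarith
  set r : α × β → ℝ := fun ab => probOf p X ab.1 * probOf p Y ab.2 with hrdef
  have hr0 : ∀ ab, 0 ≤ r ab := fun ab => mul_nonneg (hXnn _) (hYnn _)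
  have hr1 : ∑ ab, r ab = 1 := by
    rw [hrdef, Fintype.sum_prod_type]
    simp only
    rw [← Finset.sum_mul_sum, sum_probOf, sum_probOf, hp1, mul_one]
  have hsupp : ∀ ab, 0 < q ab → 0 < r ab := by
    rintro ⟨x, y⟩ h
    exact mul_pos (hsX x y h) (hsY x y h)
  have hgibbs := gibbs q r hq0 hq1 hr0 (le_of_eq hr1) hsupp
  -- rewrite mutualInfo
  have hHX : ∑ x, probOf p X x * Real.logb 2 (probOf p X x)
      = ∑ ab : α × β, q ab * Real.logb 2 (probOf p X ab.1) := by
    rw [Fintype.sum_prod_type]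
    apply Finset.sum_congr rfl
    intro x _
    simp only [Prod.fst]
    rw [← Finset.sum_mul, ← hX]
  have hHY : ∑ y, probOf p Y y * Real.logb 2 (probOf p Y y)
      = ∑ ab : α × β, q ab * Real.logb 2 (probOf p Y ab.2) := by
    rw [Fintype.sum_prod_type_right]
    apply Finset.sum_congr rfl
    intro y _
    simp only [Prod.snd]
    rw [← Finset.sum_mul, ← hY]
  have hsplit : ∑ ab : α × β, q ab * Real.logb 2 (r ab)
      = ∑ ab : α × β, q ab * Real.logb 2 (probOf p X ab.1)
        + ∑ ab : α × β, q ab * Real.logb 2 (probOf p Y ab.2) := by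
    rw [← Finset.sum_add_distrib]
    apply Finset.sum_congr rfl
    rintro ⟨x, y⟩ _
    rcases eq_or_lt_of_le (hq0 (x, y)) with h | h
    · rw [← h]; ring
    · rw [hrdef]
      simp only
      rw [Real.logb_mul (ne_of_gt (hsX x y h)) (ne_of_gt (hsY x y h))]
      ring
  unfold mutualInfo entropy
  rw [← hqdef, hHX, hHY]
  have := hgibbs
  rw [hsplit] at this
  linarith

lemma condp_nonneg (p : Ω → ℝ) (hp : ∀ ω, 0 ≤ p ω) (Z : Ω → γ) (z : γ) (ω : Ω) :
    0 ≤ condp p Z z ω := by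
  unfold condp
  split_ifs
  · exact div_nonneg (hp ω) (probOf_nonneg p hp Z z)
  · exact le_refl _

lemma probOf_condp (p : Ω → ℝ) (Z : Ω → γ) (z : γ) (X : Ω → α) (x : α) :
    probOf (condp p Z z) X x
      = probOf p (fun ω => (X ω, Z ω)) (x, z) / probOf p Z z := by
  unfold condp probOf
  rw [Finset.sum_div]
  apply Finset.sum_congr rfl
  intro ω _
  by_cases h1 : X ω = x <;> by_cases h2 : Z ω = z <;>
    simp [h1, h2, Prod.ext_iff]

lemma sum_condp (p : Ω → ℝ) (Z : Ω → γ) (z : γ) (h : probOf p Z z ≠ 0) :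
    ∑ ω, condp p Z z ω = 1 := by
  have he : ∀ ω, condp p Z z ω = (if Z ω = z then p ω else 0) / probOf p Z z := by
    intro ω
    unfold condp
    split_ifs <;> simp
  simp only [he]
  rw [← Finset.sum_div]
  exact div_self h

-- key pointwise identity

lemma cond_key (P Q : ℝ) (hP : 0 ≤ P) (hQ : 0 ≤ Q) (hQP : P = 0 → Q = 0) :
    P * (Q / P * Real.logb 2 (Q / P)) = Q * Real.logb 2 Q - Q * Real.logb 2 P := by
  rcases eq_or_lt_of_le hP with h | hPpos
  · rw [← h, hQP h.symm]; simp
  rcases eq_or_lt_of_le hQ with h | hQpos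
  · rw [← h]; simp
  rw [Real.logb_div (ne_of_gt hQpos) (ne_of_gt hPpos)]
  field_simp

lemma entropy_cond_decomp (p : Ω → ℝ) (hp : ∀ ω, 0 ≤ p ω) (X : Ω → α) (Z : Ω → γ) :
    entropy p (fun ω => (X ω, Z ω)) - entropy p Z
      = ∑ z, probOf p Z z * entropy (condp p Z z) X := by
  have hQP : ∀ x z, probOf p Z z = 0 → probOf p (fun ω => (X ω, Z ω)) (x, z) = 0 := by
    intro x z h
    have h1 : probOf p (fun ω => (X ω, Z ω)) (x, z) ≤ probOf p Z z := by
      rw [probOf_snd p X Z z]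
      exact Finset.single_le_sum
        (f := fun x => probOf p (fun ω => (X ω, Z ω)) (x, z))
        (fun x _ => probOf_nonneg p hp _ _) (Finset.mem_univ x)
    have h2 := probOf_nonneg p hp (fun ω => (X ω, Z ω)) (x, z)
    linarith
  -- expand everything
  have hR : ∀ z, probOf p Z z * entropy (condp p Z z) X
      = -∑ x, (probOf p (fun ω => (X ω, Z ω)) (x, z) * Real.logb 2 (probOf p (fun ω => (X ω, Z ω)) (x, z))
          - probOf p (fun ω => (X ω, Z ω)) (x, z) * Real.logb 2 (probOf p Z z)) := by
    intro z
    unfold entropy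
    rw [mul_neg, neg_inj, Finset.mul_sum]
    apply Finset.sum_congr rfl
    intro x _
    rw [probOf_condp]
    exact cond_key _ _ (probOf_nonneg p hp Z z) (probOf_nonneg p hp _ _) (hQP x z)
  rw [Finset.sum_congr rfl (fun z _ => hR z)]
  unfold entropy
  have hZ : ∑ z, probOf p Z z * Real.logb 2 (probOf p Z z)
      = ∑ z, ∑ x, probOf p (fun ω => (X ω, Z ω)) (x, z) * Real.logb 2 (probOf p Z z) := by
    apply Finset.sum_congr rfl
    intro z _
    rw [← Finset.sum_mul, ← probOf_snd]
  have hXZ : ∑ ab : α × γ, probOf p (fun ω => (X ω, Z ω)) ab * Real.logb 2 (probOf p (fun ω => (X ω, Z ω)) ab)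
      = ∑ z, ∑ x, probOf p (fun ω => (X ω, Z ω)) (x, z) * Real.logb 2 (probOf p (fun ω => (X ω, Z ω)) (x, z)) := by
    rw [Fintype.sum_prod_type, Finset.sum_comm]
  rw [hZ, hXZ, Finset.sum_neg_distrib]
  simp only [Finset.sum_sub_distrib]
  ring

lemma condMutualInfo_decomp (p : Ω → ℝ) (hp : ∀ ω, 0 ≤ p ω)
    (X : Ω → α) (Y : Ω → β) (Z : Ω → γ) :
    condMutualInfo p X Y Z = ∑ z, probOf p Z z * mutualInfo (condp p Z z) X Y := by
  have hassoc : entropy p (fun ω => (X ω, Y ω, Z ω))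
      = entropy p (fun ω => ((X ω, Y ω), Z ω)) := by
    rw [show (fun ω => ((X ω, Y ω), Z ω))
        = (fun ω => (Equiv.prodAssoc α β γ).symm (X ω, Y ω, Z ω)) from rfl,
      entropy_comp _ _ _ (Equiv.injective _)]
  have e1 := entropy_cond_decomp p hp X Z
  have e2 := entropy_cond_decomp p hp Y Z
  have e3 := entropy_cond_decomp p hp (fun ω => (X ω, Y ω)) Z
  unfold condMutualInfo mutualInfo
  rw [hassoc]
  simp only [mul_sub, mul_add, Finset.sum_sub_distrib, Finset.sum_add_distrib]
  unfold mutualInfo at *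
  linarith [e1, e2, e3]

lemma condMutualInfo_nonneg (p : Ω → ℝ) (hp : ∀ ω, 0 ≤ p ω)
    (X : Ω → α) (Y : Ω → β) (Z : Ω → γ) : 0 ≤ condMutualInfo p X Y Z := by
  rw [condMutualInfo_decomp p hp X Y Z]
  apply Finset.sum_nonneg
  intro z _
  by_cases h : probOf p Z z = 0
  · simp [h]
  · exact mul_nonneg (probOf_nonneg p hp Z z)
      (mutualInfo_nonneg (condp p Z z) (condp_nonneg p hp Z z) (sum_condp p Z z h) X Y)

lemma condMutualInfo_le (p : Ω → ℝ) (hp : ∀ ω, 0 ≤ p ω) (hp1 : ∑ ω, p ω = 1)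
    (X : Ω → α) (Y : Ω → β) (Z : Ω → γ) :
    condMutualInfo p X Y Z ≤ mutualInfo p (fun ω => (X ω, Z ω)) Y := by
  have hperm : entropy p (fun ω => ((X ω, Z ω), Y ω))
      = entropy p (fun ω => (X ω, Y ω, Z ω)) := by
    have hinj : Function.Injective (fun t : α × β × γ => ((t.1, t.2.2), t.2.1)) := by
      rintro ⟨a, b, c⟩ ⟨a', b', c'⟩ h
      simp_all [Prod.ext_iff]
    rw [show (fun ω => ((X ω, Z ω), Y ω))
        = (fun ω => (fun t : α × β × γ => ((t.1, t.2.2), t.2.1)) (X ω, Y ω, Z ω)) from rfl,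
      entropy_comp _ _ _ hinj]
  have hyz := mutualInfo_nonneg p hp hp1 Y Z
  unfold condMutualInfo
  unfold mutualInfo at *
  rw [hperm] at *
  have hswap := entropy_swap p Y Z
  linarith

lemma mutualInfo_le_pair (p : Ω → ℝ) (hp : ∀ ω, 0 ≤ p ω)
    (X : Ω → α) (Y : Ω → β) (W : Ω → δ) :
    mutualInfo p X Y ≤ mutualInfo p X (fun ω => (W ω, Y ω)) := by
  rw [mutualInfo_chain p X W Y]
  have := condMutualInfo_nonneg p hp X W Y
  linarith

end Helpers

section Step
variable {Ω TA TB TC TD TX : Type*} [Fintype Ω] [Fintype TA] [Fintype TB] [Fintype TC]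
  [Fintype TD] [Fintype TX] [DecidableEq TA] [DecidableEq TB] [DecidableEq TC]
  [DecidableEq TD] [DecidableEq TX]

/-- the inductive step of the chaining argument, abstractly. -/
lemma chain_step (p : Ω → ℝ) (hp : ∀ ω, 0 ≤ p ω) (hp1 : ∑ ω, p ω = 1)
    (Af : Ω → TA) (Bf : Ω → TB) (Cf : Ω → TC) (Df : Ω → TD) (Xf : Ω → TX)
    (ε δ : ℝ)
    (hAC : mutualInfo p Af Cf ≤ ε)
    (hmarkov : condMutualInfo p Bf Xf Df = 0)
    (f : TA × TC → TX) (hfinj : Function.Injective f) (hfeq : ∀ ω, f (Af ω, Cf ω) = Xf ω)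
    (hDB : mutualInfo p Df Bf ≤ δ) :
    mutualInfo p Af (fun ω => (Bf ω, Cf ω)) ≤ ε + δ := by
  have s1 : condMutualInfo p Af Bf Cf ≤ mutualInfo p (fun ω => (Af ω, Cf ω)) Bf :=
    condMutualInfo_le p hp hp1 Af Bf Cf
  have s2 : mutualInfo p Bf (fun ω => (Af ω, Cf ω)) = mutualInfo p Bf Xf := by
    rw [← mutualInfo_comp p Bf (fun ω => (Af ω, Cf ω)) f hfinj]
    congr 1
    funext ω
    exact hfeq ω
  have s3 : mutualInfo p Bf Xf ≤ mutualInfo p Bf (fun ω => (Df ω, Xf ω)) :=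
    mutualInfo_le_pair p hp Bf Xf Df
  have hswapinj : Function.Injective (fun t : TX × TD => (t.2, t.1)) := by
    rintro ⟨a, b⟩ ⟨a', b'⟩ h
    simp_all [Prod.ext_iff]
  have s4 : mutualInfo p Bf (fun ω => (Df ω, Xf ω))
      = mutualInfo p Bf (fun ω => (Xf ω, Df ω)) := by
    have h := mutualInfo_comp p Bf (fun ω => (Xf ω, Df ω)) (fun t => (t.2, t.1)) hswapinj
    simpa using h
  have s5 : mutualInfo p Bf (fun ω => (Xf ω, Df ω))
      = mutualInfo p Bf Df + condMutualInfo p Bf Xf Df :=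
    mutualInfo_chain p Bf Xf Df
  have s6 : mutualInfo p Bf Df = mutualInfo p Df Bf := mutualInfo_comm p Bf Df
  have s7 : mutualInfo p (fun ω => (Af ω, Cf ω)) Bf
      = mutualInfo p Bf (fun ω => (Af ω, Cf ω)) := mutualInfo_comm p _ Bf
  have s8 : mutualInfo p Af (fun ω => (Bf ω, Cf ω))
      = mutualInfo p Af Cf + condMutualInfo p Af Bf Cf := mutualInfo_chain p Af Bf Cf
  linarith

end Step

/-- under per-block leakage bounds and the chaining Markov condition,
`I(E_j; (M^j, Z^j)) ≤ j·ε` for every `j` (here `j`-th block is index `j : Fin m`,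
i.e. the `(j.val+1)`-st block). -/
theorem chaining_leakage_le {Ω : Type*} [Fintype Ω]
    (p : Ω → ℝ) (hp : ∀ ω, 0 ≤ p ω) (hp1 : ∑ ω, p ω = 1)
    (m : ℕ) (α β γ : Fin m → Type*)
    [∀ j, Fintype (α j)] [∀ j, DecidableEq (α j)]
    [∀ j, Fintype (β j)] [∀ j, DecidableEq (β j)]
    [∀ j, Fintype (γ j)] [∀ j, DecidableEq (γ j)]
    (E : (j : Fin m) → Ω → α j) (M : (j : Fin m) → Ω → β j) (Z : (j : Fin m) → Ω → γ j)
    (ε : ℝ) (hε : 0 ≤ ε)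
    (h1 : ∀ j : Fin m, mutualInfo p (E j) (fun ω => (M j ω, Z j ω)) ≤ ε)
    (h2 : ∀ j : Fin m, 0 < j.val →
      condMutualInfo p
        (fun ω => ((fun i : {i : Fin m // i.val < j.val} => M i.1 ω),
                   (fun i : {i : Fin m // i.val < j.val} => Z i.1 ω)))
        (fun ω => (M j ω, E j ω, Z j ω))
        (E ⟨j.val - 1, Nat.lt_of_le_of_lt (Nat.sub_le _ _) j.isLt⟩) = 0)
    (j : Fin m) :
    mutualInfo p (E j)
      (fun ω => ((fun i : {i : Fin m // i.val ≤ j.val} => M i.1 ω),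
                 (fun i : {i : Fin m // i.val ≤ j.val} => Z i.1 ω)))
      ≤ (j.val + 1) * ε := by
  suffices main : ∀ n : ℕ, ∀ hn : n < m, mutualInfo p (E ⟨n, hn⟩)
      (fun ω => ((fun i : {i : Fin m // i.val ≤ n} => M i.1 ω),
                 (fun i : {i : Fin m // i.val ≤ n} => Z i.1 ω)))
      ≤ ((n : ℝ) + 1) * ε by
    exact main j.val j.isLt
  intro n
  induction n with
  | zero =>
    intro hn
    have hginj : Function.Injective
        (fun FG : ((i : {i : Fin m // i.val ≤ 0}) → β i.1) ×
                  ((i : {i : Fin m // i.val ≤ 0}) → γ i.1) =>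
          (FG.1 ⟨⟨0, hn⟩, Nat.le_refl 0⟩, FG.2 ⟨⟨0, hn⟩, Nat.le_refl 0⟩)) := by
      rintro ⟨F, G⟩ ⟨F', G'⟩ h
      simp only [Prod.mk.injEq] at h
      obtain ⟨hF, hG⟩ := h
      refine Prod.ext ?_ ?_ <;> simp only
      · funext i
        have hi : i = ⟨⟨0, hn⟩, Nat.le_refl 0⟩ := by
          apply Subtype.ext; apply Fin.ext
          exact Nat.le_zero.mp i.2
        rw [hi]; exact hF
      · funext i
        have hi : i = ⟨⟨0, hn⟩, Nat.le_refl 0⟩ := by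
          apply Subtype.ext; apply Fin.ext
          exact Nat.le_zero.mp i.2
        rw [hi]; exact hG
    have key := mutualInfo_comp p (E ⟨0, hn⟩)
      (fun ω => ((fun i : {i : Fin m // i.val ≤ 0} => M i.1 ω),
                 (fun i : {i : Fin m // i.val ≤ 0} => Z i.1 ω)))
      _ hginj
    rw [← key]
    have hb := h1 ⟨0, hn⟩
    have hc : (((0 : ℕ) : ℝ) + 1) * ε = ε := by norm_num
    rw [hc]
    exact hb
  | succ k ih =>
    intro hn
    have hk : k < m := Nat.lt_of_succ_lt hn
    -- injective reshaping of the ≤ k+1 history into (history < k+1, current block)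
    have hginj : Function.Injective
        (fun FG : ((i : {i : Fin m // i.val ≤ k + 1}) → β i.1) ×
                  ((i : {i : Fin m // i.val ≤ k + 1}) → γ i.1) =>
          (((fun i : {i : Fin m // i.val < k + 1} => FG.1 ⟨i.1, Nat.le_of_lt i.2⟩),
            (fun i : {i : Fin m // i.val < k + 1} => FG.2 ⟨i.1, Nat.le_of_lt i.2⟩)),
           (FG.1 ⟨⟨k + 1, hn⟩, Nat.le_refl _⟩, FG.2 ⟨⟨k + 1, hn⟩, Nat.le_refl _⟩))) := by
      rintro ⟨F, G⟩ ⟨F', G'⟩ h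
      simp only [Prod.mk.injEq] at h
      obtain ⟨⟨hF1, hG1⟩, hF2, hG2⟩ := h
      refine Prod.ext ?_ ?_ <;> simp only
      · funext i
        rcases Nat.lt_or_ge i.1.val (k + 1) with hlt | hge
        · exact congrFun hF1 ⟨i.1, hlt⟩
        · have hi : i = ⟨⟨k + 1, hn⟩, Nat.le_refl _⟩ := by
            apply Subtype.ext; apply Fin.ext
            have := i.2; simp only; omega
          rw [hi]; exact hF2
      · funext i
        rcases Nat.lt_or_ge i.1.val (k + 1) with hlt | hge
        · exact congrFun hG1 ⟨i.1, hlt⟩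
        · have hi : i = ⟨⟨k + 1, hn⟩, Nat.le_refl _⟩ := by
            apply Subtype.ext; apply Fin.ext
            have := i.2; simp only; omega
          rw [hi]; exact hG2
    have hsplit := mutualInfo_comp p (E ⟨k + 1, hn⟩)
      (fun ω => ((fun i : {i : Fin m // i.val ≤ k + 1} => M i.1 ω),
                 (fun i : {i : Fin m // i.val ≤ k + 1} => Z i.1 ω)))
      _ hginj
    -- injective reshaping of the ≤ k history into the < k+1 history
    have hg2inj : Function.Injective
        (fun FG : ((i : {i : Fin m // i.val ≤ k}) → β i.1) ×
                  ((i : {i : Fin m // i.val ≤ k}) → γ i.1) =>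
          (((fun i : {i : Fin m // i.val < k + 1} => FG.1 ⟨i.1, Nat.lt_succ_iff.mp i.2⟩),
            (fun i : {i : Fin m // i.val < k + 1} => FG.2 ⟨i.1, Nat.lt_succ_iff.mp i.2⟩)))) := by
      rintro ⟨F, G⟩ ⟨F', G'⟩ h
      simp only [Prod.mk.injEq] at h
      obtain ⟨hF, hG⟩ := h
      refine Prod.ext ?_ ?_ <;> simp only
      · funext i
        exact congrFun hF ⟨i.1, Nat.lt_succ_of_le i.2⟩
      · funext i
        exact congrFun hG ⟨i.1, Nat.lt_succ_of_le i.2⟩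
    have hemb2 := mutualInfo_comp p (E ⟨k, hk⟩)
      (fun ω => ((fun i : {i : Fin m // i.val ≤ k} => M i.1 ω),
                 (fun i : {i : Fin m // i.val ≤ k} => Z i.1 ω)))
      _ hg2inj
    have hDB : mutualInfo p (E ⟨k, hk⟩)
        (fun ω => ((fun i : {i : Fin m // i.val < k + 1} => M i.1 ω),
                   (fun i : {i : Fin m // i.val < k + 1} => Z i.1 ω)))
        ≤ ((k : ℝ) + 1) * ε := by
      have h' := ih hk
      rw [← hemb2] at h'
      exact h'
    have hfinj : Function.Injective
        (fun t : α ⟨k + 1, hn⟩ × (β ⟨k + 1, hn⟩ × γ ⟨k + 1, hn⟩) =>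
          (t.2.1, t.1, t.2.2)) := by
      rintro ⟨a, b, c⟩ ⟨a', b', c'⟩ h
      simp_all [Prod.ext_iff]
    have hstep := chain_step p hp hp1 (E ⟨k + 1, hn⟩)
      (fun ω => ((fun i : {i : Fin m // i.val < k + 1} => M i.1 ω),
                 (fun i : {i : Fin m // i.val < k + 1} => Z i.1 ω)))
      (fun ω => (M ⟨k + 1, hn⟩ ω, Z ⟨k + 1, hn⟩ ω))
      (E ⟨k, hk⟩)
      (fun ω => (M ⟨k + 1, hn⟩ ω, E ⟨k + 1, hn⟩ ω, Z ⟨k + 1, hn⟩ ω))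
      ε (((k : ℝ) + 1) * ε)
      (h1 ⟨k + 1, hn⟩)
      (h2 ⟨k + 1, hn⟩ (Nat.succ_pos k))
      _ hfinj (fun ω => rfl)
      hDB
    have hfinal : mutualInfo p (E ⟨k + 1, hn⟩)
        (fun ω => ((fun i : {i : Fin m // i.val ≤ k + 1} => M i.1 ω),
                   (fun i : {i : Fin m // i.val ≤ k + 1} => Z i.1 ω)))
        ≤ ε + ((k : ℝ) + 1) * ε := by
      rw [← hsplit]
      exact hstep
    have hc : (((k + 1 : ℕ) : ℝ) + 1) * ε = ε + ((k : ℝ) + 1) * ε := by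
      push_cast; ring
    rw [hc]
    exact hfinal
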